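/- In ℝ² with the ℓ¹-norm ‖(a,b)‖ = |a|+|b|, taking x = (3/4, 3/4) and y = (−1, 0), one has 2 − ‖x/‖x‖ + y/‖y‖‖ = 1 < 4/3 = ‖x‖/‖y‖ + ‖y‖/‖x‖ − ‖x/‖y‖ + y/‖x‖‖, showing that the new correction term can be strictly larger than Maligranda's correction term. -/

import Mathlib

theorem stmt_8 :
    let x : WithLp 1 (ℝ × ℝ) := (WithLp.equiv 1 (ℝ × ℝ)).symm (3/4, 3/4)
    let y : WithLp 1 (ℝ × ℝ) := (WithLp.equiv 1 (ℝ × ℝ)).symm (-1, 0)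
    2 - ‖(1 / ‖x‖) • x + (1 / ‖y‖) • y‖ = 1 ∧
    ‖x‖ / ‖y‖ + ‖y‖ / ‖x‖ - ‖(1 / ‖y‖) • x + (1 / ‖x‖) • y‖ = 4 / 3 ∧
    (1 : ℝ) < 4 / 3 := by
  intro x y
  have h1 : ∀ f : WithLp 1 (ℝ × ℝ), ‖f‖ = |f.fst| + |f.snd| := by
    intro f
    rw [WithLp.prod_norm_eq_add (by norm_num)]
    norm_num
  have hx : ‖x‖ = 3/2 := by rw [h1]; norm_num [x, abs_of_nonneg]
  have hy : ‖y‖ = 1 := by rw [h1]; norm_num [y]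
  refine ⟨?_, ?_, by norm_num⟩
  · rw [h1]
    simp only [hx, hy, x, y, WithLp.equiv_symm_apply, ← WithLp.toLp_smul, ← WithLp.toLp_add,
      Prod.smul_mk, Prod.mk_add_mk, smul_eq_mul, WithLp.toLp_fst, WithLp.toLp_snd]
    norm_num [h1, abs_of_nonneg, abs_of_nonpos]
  · rw [h1]
    simp only [hx, hy, x, y, WithLp.equiv_symm_apply, ← WithLp.toLp_smul, ← WithLp.toLp_add,
      Prod.smul_mk, Prod.mk_add_mk, smul_eq_mul, WithLp.toLp_fst, WithLp.toLp_snd]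
    rw [h1]
    norm_num [h1, abs_of_nonneg]
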